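/- Let A be a real symmetric n×n matrix and B the adjacency matrix of the m-splitting graph as above. For any split vertex, i.e., an index of the form (j,k) with j ∈ {1,…,m} and k ≤ n in the bottom block, the corresponding diagonal entry of |B| equals (2/√(4m+1)) times the k-th diagonal entry of |A|. -/

import Mathlib

open Matrix Kronecker

noncomputable section Stmt15Aux

/-- `√(4m+1)` -/
def stmt15s (m : ℕ) : ℝ := Real.sqrt (4 * m + 1)

lemma stmt15s_pos (m : ℕ) : 0 < stmt15s m :=
  Real.sqrt_pos.mpr (by positivity)

lemma stmt15s_sq (m : ℕ) : stmt15s m * stmt15s m = 4 * m + 1 :=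
  Real.mul_self_sqrt (by positivity)

/-- the square root of `B₀²` where `B₀ = [[1,1ᵀ],[1,0]]`. -/
def stmt15Kp (m : ℕ) : Matrix (Unit ⊕ Fin m) (Unit ⊕ Fin m) ℝ :=
  (stmt15s m)⁻¹ • Matrix.fromBlocks (Matrix.of fun _ _ => (2 * m + 1 : ℝ))
    (Matrix.of fun _ _ => 1) (Matrix.of fun _ _ => 1) (Matrix.of fun _ _ => 2)

def stmt15B0 (m : ℕ) : Matrix (Unit ⊕ Fin m) (Unit ⊕ Fin m) ℝ :=
  Matrix.fromBlocks (Matrix.of fun _ _ => 1) (Matrix.of fun _ _ => 1)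
    (Matrix.of fun _ _ => 1) 0

def stmt15e (n m : ℕ) : (Fin n ⊕ Fin m × Fin n) ≃ (Unit ⊕ Fin m) × Fin n where
  toFun := Sum.elim (fun k => (Sum.inl (), k)) (fun p => (Sum.inr p.1, p.2))
  invFun := fun q => Sum.casesOn q.1 (fun _ => Sum.inl q.2) (fun j => Sum.inr (j, q.2))
  left_inv := by rintro (k | ⟨j, k⟩) <;> rfl
  right_inv := by rintro ⟨(u | j), k⟩ <;> rfl

lemma stmt15Kp_sq (m : ℕ) : stmt15Kp m * stmt15Kp m = stmt15B0 m * stmt15B0 m := by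
  have hs := stmt15s_sq m
  have hs0 := (stmt15s_pos m).ne'
  ext i j
  rcases i with i | i <;> rcases j with j | j <;>
    simp [stmt15Kp, stmt15B0, Matrix.mul_apply, Fintype.sum_sum_type,
      Finset.sum_const, Finset.card_univ, nsmul_eq_mul, Matrix.fromBlocks] <;>
    field_simp <;> nlinarith [hs]

lemma stmt15Kp_psd (m : ℕ) : (stmt15Kp m).PosSemidef := by
  refine Matrix.PosSemidef.of_dotProduct_mulVec_nonneg ?_ ?_
  · ext i j
    rcases i with i | i <;> rcases j with j | j <;>
      simp [stmt15Kp, Matrix.conjTranspose_apply, Matrix.fromBlocks]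
  · intro x
    have hs0 : (0:ℝ) ≤ (stmt15s m)⁻¹ := (inv_nonneg).mpr (stmt15s_pos m).le
    have : star x ⬝ᵥ (stmt15Kp m) *ᵥ x =
        (stmt15s m)⁻¹ * ((x (Sum.inl ()) + ∑ j, x (Sum.inr j)) ^ 2
          + 2 * m * x (Sum.inl ()) ^ 2 + (∑ j, x (Sum.inr j)) ^ 2) := by
      simp only [stmt15Kp, dotProduct, Matrix.mulVec, dotProduct,
        Fintype.sum_sum_type, Matrix.smul_apply, Matrix.fromBlocks_apply₁₁,
        Matrix.fromBlocks_apply₁₂, Matrix.fromBlocks_apply₂₁, Matrix.fromBlocks_apply₂₂,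
        Matrix.of_apply, Pi.star_apply, star_trivial, smul_eq_mul]
      rw [Finset.univ_unique (α := Unit), Finset.sum_singleton]
      simp only [Finset.sum_singleton, ← Finset.mul_sum, ← Finset.sum_mul]
      ring
    rw [this]
    positivity

lemma stmt15_kron_psd {a b : Type*} [Fintype a] [Fintype b] [DecidableEq a] [DecidableEq b]
    {M : Matrix a a ℝ} {N : Matrix b b ℝ} (hM : M.PosSemidef) (hN : N.PosSemidef) :
    (M ⊗ₖ N).PosSemidef := by
  obtain ⟨C, rfl⟩ : ∃ C : Matrix a a ℝ, M = Cᴴ * C := by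
    open scoped MatrixOrder in exact CStarAlgebra.nonneg_iff_eq_star_mul_self.mp hM.nonneg
  obtain ⟨D, rfl⟩ : ∃ D : Matrix b b ℝ, N = Dᴴ * D := by
    open scoped MatrixOrder in exact CStarAlgebra.nonneg_iff_eq_star_mul_self.mp hN.nonneg
  rw [Matrix.mul_kronecker_mul Cᴴ C Dᴴ D]
  have h : Cᴴ ⊗ₖ Dᴴ = (C ⊗ₖ D)ᴴ := by
    ext ⟨i1, i2⟩ ⟨j1, j2⟩
    simp [Matrix.conjTranspose_apply, Matrix.kroneckerMap_apply]
  rw [h]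
  exact Matrix.posSemidef_conjTranspose_mul_self _

end Stmt15Aux

theorem stmt_15 (n m : ℕ) (hm : 1 ≤ m)
    (A : Matrix (Fin n) (Fin n) ℝ) (hA : A.IsSymm)
    (B : Matrix (Fin n ⊕ Fin m × Fin n) (Fin n ⊕ Fin m × Fin n) ℝ)
    (hB : B = Matrix.fromBlocks A
      (Matrix.of fun i (p : Fin m × Fin n) => A i p.2)
      (Matrix.of fun (p : Fin m × Fin n) j => A p.2 j)
      0)
    (S : Matrix (Fin n) (Fin n) ℝ) (hS : S.PosSemidef) (hS2 : S ^ 2 = A ^ 2)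
    (T : Matrix (Fin n ⊕ Fin m × Fin n) (Fin n ⊕ Fin m × Fin n) ℝ)
    (hT : T.PosSemidef) (hT2 : T ^ 2 = B ^ 2) :
    ∀ (j : Fin m) (k : Fin n), T (Sum.inr (j, k)) (Sum.inr (j, k))
      = (2 / Real.sqrt (4 * m + 1)) * S k k := by
  intro j k
  have hBeq : B = (stmt15B0 m ⊗ₖ A).submatrix (stmt15e n m) (stmt15e n m) := by
    subst hB
    ext i j'
    rcases i with i | ⟨a, b⟩ <;> rcases j' with j' | ⟨c, d⟩ <;>
      simp [stmt15B0, stmt15e, Matrix.submatrix_apply, Matrix.kroneckerMap_apply]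
  set T₀ : Matrix (Fin n ⊕ Fin m × Fin n) (Fin n ⊕ Fin m × Fin n) ℝ :=
    (stmt15Kp m ⊗ₖ S).submatrix (stmt15e n m) (stmt15e n m) with hT₀
  have hT₀psd : T₀.PosSemidef :=
    (stmt15_kron_psd (stmt15Kp_psd m) hS).submatrix _
  have hSS : S * S = A * A := by rw [← pow_two, ← pow_two]; exact hS2
  have hT₀sq : T₀ ^ 2 = B ^ 2 := by
    rw [pow_two, pow_two, hBeq, hT₀]
    rw [Matrix.submatrix_mul_equiv, Matrix.submatrix_mul_equiv,
      ← Matrix.mul_kronecker_mul, ← Matrix.mul_kronecker_mul, stmt15Kp_sq, hSS]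
  have hTT : T = T₀ := by
    open scoped MatrixOrder in
    exact (CFC.sq_eq_sq_iff T T₀ hT.nonneg hT₀psd.nonneg).mp (hT2.trans hT₀sq.symm)
  rw [hTT, hT₀]
  show (stmt15Kp m ⊗ₖ S) (stmt15e n m (Sum.inr (j, k))) (stmt15e n m (Sum.inr (j, k)))
    = 2 / Real.sqrt (4 * ↑m + 1) * S k k
  have he : stmt15e n m (Sum.inr (j, k)) = (Sum.inr j, k) := rfl
  have hentry : (stmt15Kp m ⊗ₖ S) (Sum.inr j, k) (Sum.inr j, k)
      = (stmt15s m)⁻¹ * 2 * S k k := by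
    simp [stmt15Kp, Matrix.kroneckerMap_apply, mul_assoc]
  rw [he, hentry]
  simp only [stmt15s, div_eq_mul_inv]
  ring
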